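/- arXiv:2312.07603 — 2 statements merged into one kernel-verified Lean document; each statement's English description precedes it below -/
import Mathlib

section
/- Assume all entries of R and C are nonnegative. For each pair of row strategies (p,q), let 𝒞_{pq} be the rounded column profile obtained from an optimal solution of the linear-programming relaxation (as in the rounding procedure), and let w_{pq} = T_{r^p}(𝒞_{pq}) + T_{𝒞_{pq}}(r^q). Then for any two row strategies r^i and r^j, the minimum cost of an alternating path from r^i to r^j all of whose intermediate column profiles are drawn from the set {𝒞_{pq} : p, q ∈ Fin m} is at most the minimum cost over ALL alternating paths from r^i to r^j plus m·(2‖R‖_{1,1} + ‖C‖_{1,1}). -/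
open Finset

/-- Reward needed to incentivize the row player to play `i'` when the columns play `𝒞`. -/
noncomputable def Trow {m n k : ℕ} [NeZero m] (R : Fin m → Fin n → ℝ)
    (𝒞 : Fin k → Fin n) (i' : Fin m) : ℝ :=
  (univ.sup' univ_nonempty fun i => ∑ j, R i (𝒞 j)) - ∑ j, R i' (𝒞 j)

/-- Reward needed to incentivize the column players to play `𝒞'` when the row plays `i`. -/
noncomputable def Tcol {m n k : ℕ} [NeZero n] (C : Fin m → Fin n → ℝ)
    (i : Fin m) (𝒞' : Fin k → Fin n) : ℝ :=
  k * (univ.sup' univ_nonempty fun q => C i q) - ∑ j, C i (𝒞' j)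

/-- A vertex of an alternating path: a row strategy or a column profile. -/
abbrev AltVert (m n k : ℕ) := Fin m ⊕ (Fin k → Fin n)

/-- Weight of a step of an alternating path. -/
noncomputable def altWeight {m n k : ℕ} [NeZero m] [NeZero n] (R C : Fin m → Fin n → ℝ) :
    AltVert m n k → AltVert m n k → ℝ
  | Sum.inl r, Sum.inr c => Tcol C r c
  | Sum.inr c, Sum.inl r => Trow R c r
  | _, _ => 0

/-- `v 0, v 1, …, v L` is an alternating path. -/
def IsAlt {m n k : ℕ} (v : ℕ → AltVert m n k) (L : ℕ) : Prop :=
  ∀ t < L, (v t).isLeft ≠ (v (t+1)).isLeft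

/-- Cost of the alternating path `v 0, v 1, …, v L`. -/
noncomputable def altCost {m n k : ℕ} [NeZero m] [NeZero n] (R C : Fin m → Fin n → ℝ)
    (v : ℕ → AltVert m n k) (L : ℕ) : ℝ :=
  ∑ t ∈ Finset.range L, altWeight R C (v t) (v (t+1))

/-- Feasibility for the linear program `LP_z`. -/
def LPfeasible {m n : ℕ} (R : Fin m → Fin n → ℝ) (k : ℕ) (z : Fin m) (x : Fin n → ℝ) : Prop :=
  (∀ q, 0 ≤ x q) ∧ (∑ q, x q = (k : ℝ)) ∧
  (∀ z' : Fin m, ∑ q, x q * R z' q ≤ ∑ q, x q * R z q)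

/-- Objective of the linear program `LP_z(p,q)`. -/
noncomputable def LPobj {m n : ℕ} [NeZero n] (R C : Fin m → Fin n → ℝ) (k : ℕ)
    (p q z : Fin m) (x : Fin n → ℝ) : ℝ :=
  (k * (univ.sup' univ_nonempty fun q' => C p q') - ∑ q', x q' * C p q')
    + ∑ q', x q' * R z q' - ∑ q', x q' * R q q'

/-- The set of objective values attained by feasible solutions of the programs `LP_z(p,q)`. -/
noncomputable def wstarSet {m n : ℕ} [NeZero n] (R C : Fin m → Fin n → ℝ) (k : ℕ)
    (p q : Fin m) : Set ℝ :=
  {y | ∃ (z : Fin m) (x : Fin n → ℝ), LPfeasible R k z x ∧ y = LPobj R C k p q z x}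

noncomputable def pcost {m n k : ℕ} [NeZero m] [NeZero n] (R C : Fin m → Fin n → ℝ)
    (r : ℕ → Fin m) (c : ℕ → Fin k → Fin n) (s : ℕ) : ℝ :=
  ∑ t ∈ Finset.range s, (Tcol C (r t) (c t) + Trow R (c t) (r (t + 1)))

lemma Trow_nonneg {m n k : ℕ} [NeZero m] (R : Fin m → Fin n → ℝ)
    (𝒞 : Fin k → Fin n) (i' : Fin m) : 0 ≤ Trow R 𝒞 i' :=
  sub_nonneg.2 (Finset.le_sup' (fun i => ∑ j, R i (𝒞 j)) (mem_univ i'))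

lemma Tcol_nonneg {m n k : ℕ} [NeZero n] (C : Fin m → Fin n → ℝ)
    (i : Fin m) (𝒞' : Fin k → Fin n) : 0 ≤ Tcol C i 𝒞' := by
  have h : ∑ j, C i (𝒞' j) ≤ ∑ _j : Fin k, (univ.sup' univ_nonempty fun q => C i q) :=
    Finset.sum_le_sum fun j _ => Finset.le_sup' _ (mem_univ (𝒞' j))
  simp only [Finset.sum_const, card_univ, Fintype.card_fin, nsmul_eq_mul] at h
  exact sub_nonneg.2 h

lemma altWeight_nonneg {m n k : ℕ} [NeZero m] [NeZero n] (R C : Fin m → Fin n → ℝ)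
    (a b : AltVert m n k) : 0 ≤ altWeight R C a b := by
  rcases a with r | c <;> rcases b with r' | c' <;>
    simp [altWeight, Trow_nonneg, Tcol_nonneg]

lemma fiber_sum {n k : ℕ} (c : Fin k → Fin n) (f : Fin n → ℝ) :
    ∑ q' : Fin n, ((univ.filter fun j => c j = q').card : ℝ) * f q' = ∑ j, f (c j) := by
  rw [← Finset.sum_fiberwise univ c (fun j => f (c j))]
  refine Finset.sum_congr rfl fun q' _ => ?_
  have h : ∀ j ∈ univ.filter fun j => c j = q', f (c j) = f q' := fun j hj => by
    rw [(Finset.mem_filter.mp hj).2]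
  rw [Finset.sum_congr rfl h, Finset.sum_const, nsmul_eq_mul]

lemma sum_range_double (f : ℕ → ℝ) (s : ℕ) :
    ∑ t ∈ Finset.range (2*s), f t = ∑ t ∈ Finset.range s, (f (2*t) + f (2*t+1)) := by
  induction s with
  | zero => simp
  | succ s ih =>
    have h2 : 2 * (s+1) = (2*s + 1) + 1 := by ring
    rw [h2, Finset.sum_range_succ, Finset.sum_range_succ, ih, Finset.sum_range_succ]
    ring

lemma exists_pcost {m n k : ℕ} [NeZero m] [NeZero n] (R C : Fin m → Fin n → ℝ)
    (v : ℕ → AltVert m n k) (L : ℕ) (i j : Fin m)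
    (halt : IsAlt v L) (h0 : v 0 = Sum.inl i) (hL : v L = Sum.inl j) :
    ∃ (s : ℕ) (r : ℕ → Fin m) (c : ℕ → Fin k → Fin n),
      r 0 = i ∧ r s = j ∧ altCost R C v L = pcost R C r c s := by
  have e0 : Fin n := ⟨0, Nat.pos_of_ne_zero (NeZero.ne n)⟩
  have hpar : ∀ t, t ≤ L → ((v t).isLeft = true ↔ Even t) := by
    intro t
    induction t with
    | zero => intro _; simp [h0]
    | succ t ihh =>
      intro ht
      have h1 := halt t (by omega)
      have h2 := ihh (by omega)
      constructor
      · intro h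
        rw [Nat.even_add_one]
        intro hev
        exact h1 ((h2.mpr hev).trans h.symm)
      · intro hev
        rw [Nat.even_add_one] at hev
        have hvf : (v t).isLeft = false := by
          cases hvt : (v t).isLeft
          · rfl
          · exact absurd (h2.mp hvt) hev
        cases hvt1 : (v (t+1)).isLeft
        · exact absurd (hvf.trans hvt1.symm) h1
        · rfl
  have hLeven : Even L := (hpar L le_rfl).mp (by rw [hL]; rfl)
  obtain ⟨s2, hs2⟩ := hLeven
  have hL2 : L = 2 * s2 := by omega
  set r : ℕ → Fin m := fun t => Sum.elim id (fun _ => i) (v (2*t)) with hr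
  set c : ℕ → Fin k → Fin n := fun t => Sum.elim (fun _ _ => e0) id (v (2*t+1)) with hc
  have hvr : ∀ t, 2*t ≤ L → v (2*t) = Sum.inl (r t) := by
    intro t ht
    have hev := (hpar (2*t) ht).mpr ⟨t, two_mul t⟩
    cases hv : v (2*t) with
    | inl a => simp [hr, hv]
    | inr cc => rw [hv] at hev; simp at hev
  have hvc : ∀ t, 2*t+1 ≤ L → v (2*t+1) = Sum.inr (c t) := by
    intro t ht
    have hodd : ¬ Even (2*t+1) := by simp [Nat.even_add_one, parity_simps]
    have hev := (hpar (2*t+1) ht)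
    cases hv : v (2*t+1) with
    | inl a =>
      exfalso
      rw [hv] at hev
      simp only [Sum.isLeft_inl, true_iff] at hev
      exact hodd hev
    | inr cc => simp [hc, hv]
  refine ⟨s2, r, c, ?_, ?_, ?_⟩
  · have := hvr 0 (by omega)
    simp only [Nat.mul_zero] at this
    rw [h0] at this
    exact Sum.inl_injective this.symm
  · have := hvr s2 (by omega)
    rw [← hL2, hL] at this
    exact Sum.inl_injective this.symm
  · rw [altCost, hL2, sum_range_double, pcost]
    refine Finset.sum_congr rfl fun t ht => ?_
    rw [Finset.mem_range] at ht
    have h1 : v (2*t) = Sum.inl (r t) := hvr t (by omega)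
    have h2 : v (2*t+1) = Sum.inr (c t) := hvc t (by omega)
    have h3 : v (2*t+1+1) = Sum.inl (r (t+1)) := by
      have : 2*t+1+1 = 2*(t+1) := by ring
      rw [this]; exact hvr (t+1) (by omega)
    rw [h1, h2, h3]
    rfl

lemma pcost_mem {m n k : ℕ} [NeZero m] [NeZero n] (R C : Fin m → Fin n → ℝ)
    (r : ℕ → Fin m) (c : ℕ → Fin k → Fin n) (s : ℕ) :
    ∃ (v : ℕ → AltVert m n k), IsAlt v (2*s) ∧ v 0 = Sum.inl (r 0) ∧ v (2*s) = Sum.inl (r s) ∧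
      (∀ t ≤ 2*s, ∀ cc, v t = Sum.inr cc → ∃ t', cc = c t') ∧
      altCost R C v (2*s) = pcost R C r c s := by
  refine ⟨fun t => if Even t then Sum.inl (r (t/2)) else Sum.inr (c (t/2)), ?_, ?_, ?_, ?_, ?_⟩
  · intro t _
    by_cases h : Even t
    · have h1 : ¬ Even (t+1) := by simp [Nat.even_add_one, h]
      simp [h, h1]
    · have h1 : Even (t+1) := Nat.even_add_one.mpr h
      simp [h, h1]
  · simp
  · have h1 : Even (2*s) := ⟨s, two_mul s⟩
    have h2 : 2*s/2 = s := by omega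
    simp [h1, h2]
  · intro t _ cc hcc
    by_cases h : Even t
    · simp [h] at hcc
    · simp only [h, if_false] at hcc
      exact ⟨t/2, Sum.inr_injective hcc.symm⟩
  · rw [altCost, sum_range_double, pcost]
    refine Finset.sum_congr rfl fun t ht => ?_
    have he : Even (2*t) := ⟨t, two_mul t⟩
    have ho : ¬ Even (2*t+1) := by simp [Nat.even_add_one, parity_simps]
    have he2 : Even (2*t+1+1) := by rw [Nat.even_add_one]; exact ho
    have d1 : 2*t/2 = t := by omega
    have d2 : (2*t+1)/2 = t := by omega
    have d3 : (2*t+1+1)/2 = t+1 := by omega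
    simp only [he, ho, he2, if_true, if_false, d1, d2, d3]
    rfl

lemma segment_bound {m n k : ℕ} [NeZero m] [NeZero n] (R C : Fin m → Fin n → ℝ)
    (hR : ∀ p q, 0 ≤ R p q) (hC : ∀ p q, 0 ≤ C p q)
    (p q : Fin m) (z : Fin m) (x : Fin n → ℝ)
    (hfeas : LPfeasible R k z x)
    (hopt : IsLeast (wstarSet R C k p q) (LPobj R C k p q z x))
    (u : Fin n)
    (hu : ∀ q : Fin n, (univ.sup' univ_nonempty fun p => R p u) ≤
      univ.sup' univ_nonempty fun p => R p q)
    (x' : Fin n → ℤ)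
    (hx' : ∀ q' ≠ u, x' q' = ⌊x q'⌋)
    (hx'u : x' u = ⌊x u⌋ + ((k : ℤ) - ∑ q', ⌊x q'⌋))
    (𝒞 : Fin k → Fin n)
    (hcount : ∀ q' : Fin n, ((univ.filter fun j => 𝒞 j = q').card : ℤ) = x' q')
    (c : Fin k → Fin n) :
    Tcol C p 𝒞 + Trow R 𝒞 q ≤
      Tcol C p c + Trow R c q + (2 * (∑ p, ∑ q, R p q) + ∑ p, ∑ q, C p q) := by
  classical
  set S : ℝ := ∑ p, ∑ q, R p q with hS
  set SC : ℝ := ∑ p, ∑ q, C p q with hSC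
  have hrowR : ∀ p₀ : Fin m, ∑ q', R p₀ q' ≤ S :=
    fun p₀ => Finset.single_le_sum (f := fun p' => ∑ q', R p' q')
      (fun p' _ => Finset.sum_nonneg fun q' _ => hR p' q') (mem_univ p₀)
  have hrowC : ∀ p₀ : Fin m, ∑ q', C p₀ q' ≤ SC :=
    fun p₀ => Finset.single_le_sum (f := fun p' => ∑ q', C p' q')
      (fun p' _ => Finset.sum_nonneg fun q' _ => hC p' q') (mem_univ p₀)
  have parta : LPobj R C k p q z x ≤ Tcol C p c + Trow R c q := by
    obtain ⟨z₀, _, hz₀⟩ := Finset.exists_mem_eq_sup' (univ_nonempty (α := Fin m))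
      (fun i => ∑ j, R i (c j))
    set xc : Fin n → ℝ := fun q' => ((univ.filter fun j => c j = q').card : ℝ) with hxc
    have hfibc : ∀ f : Fin n → ℝ, ∑ q', xc q' * f q' = ∑ j, f (c j) := fun f => fiber_sum c f
    have hfeasc : LPfeasible R k z₀ xc := by
      refine ⟨fun q' => by positivity, ?_, ?_⟩
      · have h := Finset.card_eq_sum_card_fiberwise (f := c) (s := univ) (t := univ)
          (fun x _ => mem_univ (c x))
        simp only [card_univ, Fintype.card_fin] at h
        rw [hxc]
        push_cast [h]
        rfl
      · intro z'
        rw [hfibc, hfibc, ← hz₀]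
        exact Finset.le_sup' (fun i => ∑ j, R i (c j)) (mem_univ z')
    have hmemc : Tcol C p c + Trow R c q ∈ wstarSet R C k p q := by
      refine ⟨z₀, xc, hfeasc, ?_⟩
      rw [LPobj, Tcol, Trow, hfibc, hfibc, hfibc, ← hz₀]
      ring
    exact hopt.2 hmemc
  set X' : Fin n → ℝ := fun q' => ((x' q' : ℤ) : ℝ) with hX'
  have hX'def : ∀ q', X' q' = ((x' q' : ℤ) : ℝ) := fun _ => rfl
  have hfib : ∀ f : Fin n → ℝ, ∑ j, f (𝒞 j) = ∑ q', X' q' * f q' := by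
    intro f
    rw [← fiber_sum 𝒞 f]
    refine Finset.sum_congr rfl fun q' _ => ?_
    congr 1
    rw [hX'def]
    exact_mod_cast congrArg (fun w : ℤ => (w : ℝ)) (hcount q')
  have hd1 : ∀ q' ≠ u, 0 ≤ x q' - X' q' ∧ x q' - X' q' ≤ 1 := by
    intro q' hq'
    have hq : X' q' = ((⌊x q'⌋ : ℤ) : ℝ) := by rw [hX'def, hx' q' hq']
    rw [hq]
    constructor
    · linarith [Int.floor_le (x q')]
    · linarith [Int.lt_floor_add_one (x q')]
  have hsumZ : ∑ q', x' q' = (k : ℤ) := by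
    rw [← Finset.add_sum_erase _ x' (mem_univ u), hx'u,
      Finset.sum_congr rfl (fun q' hq' => hx' q' (Finset.ne_of_mem_erase hq'))]
    have he : ⌊x u⌋ + ∑ q' ∈ univ.erase u, ⌊x q'⌋ = ∑ q', ⌊x q'⌋ :=
      Finset.add_sum_erase _ (fun q' => ⌊x q'⌋) (mem_univ u)
    linarith
  have hsum_eq : ∑ q', X' q' = ∑ q', x q' := by
    have h1 : ∑ q', X' q' = ((∑ q', x' q' : ℤ) : ℝ) := by rw [hX']; push_cast; rfl
    rw [h1, hsumZ]
    push_cast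
    exact hfeas.2.1.symm
  have hzero : ∑ q', (x q' - X' q') = 0 := by
    rw [Finset.sum_sub_distrib, hsum_eq]; ring
  have hdu : x u - X' u = - ∑ q' ∈ univ.erase u, (x q' - X' q') := by
    have h := Finset.add_sum_erase univ (fun q' => x q' - X' q') (mem_univ u)
    beta_reduce at h
    rw [hzero] at h
    linarith
  have hdu_nonpos : x u - X' u ≤ 0 := by
    rw [hdu]
    simp only [neg_nonpos]
    exact Finset.sum_nonneg fun q' hq' => (hd1 q' (Finset.ne_of_mem_erase hq')).1
  have diff_le : ∀ g : Fin n → ℝ, (∀ q', 0 ≤ g q') →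
      ∑ q', x q' * g q' - ∑ q', X' q' * g q' ≤ ∑ q', g q' := by
    intro g hg
    rw [← Finset.sum_sub_distrib]
    refine Finset.sum_le_sum fun q' _ => ?_
    by_cases hq : q' = u
    · subst hq
      nlinarith [hg q', hdu_nonpos]
    · nlinarith [hg q', (hd1 q' hq).1, (hd1 q' hq).2]
  set M : Fin n → ℝ := fun q' => univ.sup' univ_nonempty fun p' => R p' q' with hM
  have hMnn : ∀ q', 0 ≤ M q' := fun q' =>
    le_trans (hR p q') (Finset.le_sup' (fun p' => R p' q') (mem_univ p))
  have hMle : ∀ q', M q' ≤ ∑ p', R p' q' := by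
    intro q'
    refine Finset.sup'_le _ _ fun p' _ => ?_
    exact Finset.single_le_sum (f := fun p' => R p' q') (fun p'' _ => hR p'' q') (mem_univ p')
  have hMS : ∑ q', M q' ≤ S := by
    calc ∑ q', M q' ≤ ∑ q', ∑ p', R p' q' := Finset.sum_le_sum fun q' _ => hMle q'
    _ = S := by rw [hS, Finset.sum_comm]
  have hMrow : ∀ i₀ : Fin m, ∀ q', R i₀ q' ≤ M q' := fun i₀ q' =>
    Finset.le_sup' (fun p' => R p' q') (mem_univ i₀)
  have hMu : ∀ q', M u ≤ M q' := hu
  have hMstep : ∀ i₀ : Fin m, ∑ q', X' q' * R i₀ q' ≤ ∑ q', x q' * R z q' + S := by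
    intro i₀
    have step1 : ∑ q', X' q' * R i₀ q' - ∑ q', x q' * R i₀ q' ≤ (X' u - x u) * M u := by
      rw [← Finset.sum_sub_distrib]
      have hsplit := Finset.add_sum_erase univ (fun q' => X' q' * R i₀ q' - x q' * R i₀ q')
        (mem_univ u)
      beta_reduce at hsplit
      rw [← hsplit]
      have h1 : X' u * R i₀ u - x u * R i₀ u ≤ (X' u - x u) * M u := by
        have hh : X' u * R i₀ u - x u * R i₀ u = (X' u - x u) * R i₀ u := by ring
        rw [hh]
        exact mul_le_mul_of_nonneg_left (hMrow i₀ u) (by linarith [hdu_nonpos])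
      have h2 : ∑ q' ∈ univ.erase u, (X' q' * R i₀ q' - x q' * R i₀ q') ≤ 0 := by
        refine Finset.sum_nonpos fun q' hq' => ?_
        have hd := hd1 q' (Finset.ne_of_mem_erase hq')
        nlinarith [hR i₀ q']
      linarith
    have step2 : (X' u - x u) * M u ≤ ∑ q' ∈ univ.erase u, M q' := by
      have he : X' u - x u = ∑ q' ∈ univ.erase u, (x q' - X' q') := by linarith [hdu]
      rw [he, Finset.sum_mul]
      refine Finset.sum_le_sum fun q' hq' => ?_
      have hd := hd1 q' (Finset.ne_of_mem_erase hq')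
      have h3 : M u ≤ M q' := hMu q'
      nlinarith [hMnn u]
    have step3 : ∑ q' ∈ univ.erase u, M q' ≤ S := by
      refine le_trans ?_ hMS
      exact Finset.sum_le_sum_of_subset_of_nonneg (Finset.erase_subset _ _)
        (fun q' _ _ => hMnn q')
    have step4 : ∑ q', x q' * R i₀ q' ≤ ∑ q', x q' * R z q' := hfeas.2.2 i₀
    linarith
  have hsupb : (univ.sup' univ_nonempty fun i₀ => ∑ j, R i₀ (𝒞 j)) ≤
      ∑ q', x q' * R z q' + S := by
    refine Finset.sup'_le _ _ fun i₀ _ => ?_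
    rw [hfib]
    exact hMstep i₀
  have hCp : ∑ q', x q' * C p q' - ∑ q', X' q' * C p q' ≤ SC :=
    le_trans (diff_le (fun q' => C p q') (fun q' => hC p q')) (hrowC p)
  have hRq : ∑ q', x q' * R q q' - ∑ q', X' q' * R q q' ≤ S :=
    le_trans (diff_le (fun q' => R q q') (fun q' => hR q q')) (hrowR q)
  rw [Tcol, Trow, hfib (fun q' => C p q'), hfib (fun q' => R q q')]
  rw [LPobj] at parta
  linarith [hsupb, hCp, hRq, parta]

/-- Restricting the intermediate column profiles of an alternating path from row strategy `r^i`
to row strategy `r^j` to the rounded profiles `𝒞_{pq}` (obtained from optimal LP solutions)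
increases the minimum cost by at most `m·(2‖R‖₁₁ + ‖C‖₁₁)`. -/
theorem restricted_alternating_path_cost_le_opt_add_error
    (m n k : ℕ) [NeZero m] [NeZero n]
    (R C : Fin m → Fin n → ℝ)
    (hR : ∀ p q, 0 ≤ R p q) (hC : ∀ p q, 0 ≤ C p q)
    (z : Fin m → Fin m → Fin m) (x : Fin m → Fin m → Fin n → ℝ)
    (hfeas : ∀ p q : Fin m, LPfeasible R k (z p q) (x p q))
    (hopt : ∀ p q : Fin m,
      IsLeast (wstarSet R C k p q) (LPobj R C k p q (z p q) (x p q)))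
    (u : Fin n)
    (hu : ∀ q : Fin n, (univ.sup' univ_nonempty fun p => R p u) ≤
      univ.sup' univ_nonempty fun p => R p q)
    (x' : Fin m → Fin m → Fin n → ℤ)
    (hx' : ∀ p q : Fin m, ∀ q' ≠ u, x' p q q' = ⌊x p q q'⌋)
    (hx'u : ∀ p q : Fin m, x' p q u = ⌊x p q u⌋ + ((k : ℤ) - ∑ q', ⌊x p q q'⌋))
    (𝒞pq : Fin m → Fin m → (Fin k → Fin n))
    (hcount : ∀ p q : Fin m, ∀ q' : Fin n,
      ((univ.filter fun j => 𝒞pq p q j = q').card : ℤ) = x' p q q')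
    (i j : Fin m) :
    sInf {y | ∃ (L : ℕ) (v : ℕ → AltVert m n k),
        IsAlt v L ∧ v 0 = Sum.inl i ∧ v L = Sum.inl j ∧
        (∀ t ≤ L, ∀ c : Fin k → Fin n, v t = Sum.inr c → ∃ p q, c = 𝒞pq p q) ∧
        y = altCost R C v L} ≤
      sInf {y | ∃ (L : ℕ) (v : ℕ → AltVert m n k),
        IsAlt v L ∧ v 0 = Sum.inl i ∧ v L = Sum.inl j ∧ y = altCost R C v L}
      + m * (2 * (∑ p, ∑ q, R p q) + ∑ p, ∑ q, C p q) := by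
  classical
  set S : ℝ := ∑ p, ∑ q, R p q with hS
  set SC : ℝ := ∑ p, ∑ q, C p q with hSC
  set E : ℝ := 2 * S + SC with hE
  have hSnn : 0 ≤ S := Finset.sum_nonneg fun p _ => Finset.sum_nonneg fun q _ => hR p q
  have hSCnn : 0 ≤ SC := Finset.sum_nonneg fun p _ => Finset.sum_nonneg fun q _ => hC p q
  have hEnn : 0 ≤ E := by rw [hE]; linarith
  set A : Set ℝ := {y | ∃ (L : ℕ) (v : ℕ → AltVert m n k),
      IsAlt v L ∧ v 0 = Sum.inl i ∧ v L = Sum.inl j ∧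
      (∀ t ≤ L, ∀ c : Fin k → Fin n, v t = Sum.inr c → ∃ p q, c = 𝒞pq p q) ∧
      y = altCost R C v L} with hA
  set B : Set ℝ := {y | ∃ (L : ℕ) (v : ℕ → AltVert m n k),
      IsAlt v L ∧ v 0 = Sum.inl i ∧ v L = Sum.inl j ∧ y = altCost R C v L} with hB
  have hAbdd : BddBelow A := by
    refine ⟨0, fun y hy => ?_⟩
    obtain ⟨L, v, _, _, _, _, hy⟩ := hy
    rw [hy, altCost]
    exact Finset.sum_nonneg fun t _ => altWeight_nonneg R C _ _
  have segment : ∀ p q : Fin m, ∀ c : Fin k → Fin n,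
      Tcol C p (𝒞pq p q) + Trow R (𝒞pq p q) q ≤ Tcol C p c + Trow R c q + E :=
    fun p q c => segment_bound R C hR hC p q (z p q) (x p q) (hfeas p q) (hopt p q) u hu
      (x' p q) (hx' p q) (hx'u p q) (𝒞pq p q) (hcount p q) c
  have main : ∀ s : ℕ, ∀ r : ℕ → Fin m, ∀ c : ℕ → Fin k → Fin n,
      r 0 = i → r s = j → sInf A ≤ pcost R C r c s + m * E := by
    intro s
    induction s using Nat.strong_induction_on with
    | _ s ih =>
      intro r c hr0 hrs
      by_cases hsm : s ≤ m
      · -- replace the column profiles by the rounded ones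
        set c' : ℕ → Fin k → Fin n := fun t => 𝒞pq (r t) (r (t+1)) with hc'
        obtain ⟨v, hvalt, hv0, hvL, hvcol, hvcost⟩ := pcost_mem R C r c' s
        have hmem : pcost R C r c' s ∈ A := by
          refine ⟨2*s, v, hvalt, by rw [hv0, hr0], by rw [hvL, hrs], ?_, hvcost.symm⟩
          intro t ht cc hcc
          obtain ⟨t', ht'⟩ := hvcol t ht cc hcc
          exact ⟨r t', r (t'+1), ht'⟩
        have h1 : sInf A ≤ pcost R C r c' s := csInf_le hAbdd hmem
        have h2 : pcost R C r c' s ≤ pcost R C r c s + s * E := by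
          have h3 : pcost R C r c' s ≤
              ∑ t ∈ Finset.range s, ((Tcol C (r t) (c t) + Trow R (c t) (r (t+1))) + E) :=
            Finset.sum_le_sum fun t _ => segment (r t) (r (t+1)) (c t)
          rw [Finset.sum_add_distrib, Finset.sum_const, Finset.card_range,
            nsmul_eq_mul] at h3
          exact h3
        have h4 : (s : ℝ) * E ≤ m * E :=
          mul_le_mul_of_nonneg_right (Nat.cast_le.2 hsm) hEnn
        linarith
      · -- shortcut a repeated row strategy
        push_neg at hsm
        have hcard : Fintype.card (Fin m) < Fintype.card (Fin (s+1)) := by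
          simp only [Fintype.card_fin]; omega
        obtain ⟨a0, b0, hab, heq0⟩ :=
          Fintype.exists_ne_map_eq_of_card_lt (fun t : Fin (s+1) => r t) hcard
        obtain ⟨a, b, hlt, hble, heq⟩ : ∃ a b : ℕ, a < b ∧ b ≤ s ∧ r a = r b := by
          rcases lt_or_gt_of_ne (fun h => hab (Fin.ext h) : (a0 : ℕ) ≠ (b0 : ℕ)) with h | h
          · exact ⟨a0, b0, h, by omega, heq0⟩
          · exact ⟨b0, a0, h, by omega, heq0.symm⟩
        set d := b - a with hd
        set s' := s - d with hs'
        have hd0 : 0 < d := by omega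
        have hds : d ≤ s := by omega
        have hs'lt : s' < s := by omega
        have hadb : a + d = b := by omega
        have hs'a : a ≤ s' := by omega
        have hs'd : s' + d = s := by omega
        set r' : ℕ → Fin m := fun t => if t < a then r t else r (t + d) with hr'
        set c' : ℕ → Fin k → Fin n := fun t => if t < a then c t else c (t + d) with hc'
        have hrle : ∀ t ≤ a, r' t = r t := by
          intro t ht
          rcases lt_or_eq_of_le ht with h | h
          · simp [hr', h]
          · subst h
            simp only [hr', lt_irrefl, if_false, hadb]
            exact heq.symm
        have hrge : ∀ t, a ≤ t → r' t = r (t + d) := by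
          intro t ht
          rcases lt_or_eq_of_le ht with h | h
          · simp [hr', not_lt.2 (le_of_lt h)]
          · subst h
            simp only [hr', lt_irrefl, if_false]
        have hr'0 : r' 0 = i := by
          rcases Nat.eq_zero_or_pos a with h | h
          · rw [hrge 0 (by omega)]
            have h2 : 0 + d = b := by omega
            rw [h2, ← heq, h, hr0]
          · rw [hrle 0 (by omega), hr0]
        have hr's' : r' s' = j := by
          rw [hrge s' hs'a, hs'd, hrs]
        set w : ℕ → ℝ := fun t => Tcol C (r t) (c t) + Trow R (c t) (r (t+1)) with hw
        have hwnn : ∀ t, 0 ≤ w t := fun t =>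
          add_nonneg (Tcol_nonneg C (r t) (c t)) (Trow_nonneg R (c t) (r (t+1)))
        have hsplit : pcost R C r' c' s' = ∑ t ∈ Finset.range a, w t +
            ∑ t ∈ Finset.Ico a s', w (t + d) := by
          rw [pcost, Finset.range_eq_Ico,
            ← Finset.sum_Ico_consecutive _ (Nat.zero_le a) hs'a]
          congr 1
          · rw [← Finset.range_eq_Ico]
            refine Finset.sum_congr rfl fun t ht => ?_
            rw [Finset.mem_range] at ht
            rw [hw]
            have e1 : r' t = r t := hrle t (by omega)
            have e2 : c' t = c t := by simp [hc', ht]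
            have e3 : r' (t+1) = r (t+1) := hrle (t+1) (by omega)
            rw [e1, e2, e3]
          · refine Finset.sum_congr rfl fun t ht => ?_
            rw [Finset.mem_Ico] at ht
            rw [hw]
            have e1 : r' t = r (t + d) := hrge t ht.1
            have e2 : c' t = c (t + d) := by simp [hc', not_lt.2 ht.1]
            have e3 : r' (t+1) = r (t + 1 + d) := hrge (t+1) (by omega)
            have e4 : t + 1 + d = t + d + 1 := by omega
            rw [e1, e2, e3, e4]
        have hre : ∑ t ∈ Finset.Ico a s', w (t + d) = ∑ t ∈ Finset.Ico b s, w t := by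
          rw [Finset.sum_Ico_eq_sum_range, Finset.sum_Ico_eq_sum_range]
          have hsb : s' - a = s - b := by omega
          rw [hsb]
          refine Finset.sum_congr rfl fun t _ => ?_
          congr 1
          omega
        have hcle : pcost R C r' c' s' ≤ pcost R C r c s := by
          rw [hsplit, hre]
          have hdisj : Disjoint (Finset.range a) (Finset.Ico b s) := by
            rw [Finset.disjoint_left]
            intro t ht ht'
            rw [Finset.mem_range] at ht
            rw [Finset.mem_Ico] at ht'
            omega
          rw [← Finset.sum_union hdisj]
          refine Finset.sum_le_sum_of_subset_of_nonneg ?_ (fun t _ _ => hwnn t)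
          intro t ht
          rw [Finset.mem_union, Finset.mem_range, Finset.mem_Ico] at ht
          rw [Finset.mem_range]
          omega
        exact le_trans (ih s' hs'lt r' c' hr'0 hr's') (by linarith)
  have hBne : B.Nonempty := by
    refine ⟨altCost R C (fun t => if t = 0 then Sum.inl i else
        if t = 1 then Sum.inr (fun _ => u) else Sum.inl j) 2, 2, _, ?_, rfl, rfl, rfl⟩
    intro t ht
    interval_cases t <;> simp
  have hle : ∀ y ∈ B, sInf A - m * E ≤ y := by
    rintro y ⟨L, v, halt, h0, hL, hy⟩
    obtain ⟨s, r, c, hr0, hrs, hcost⟩ := exists_pcost R C v L i j halt h0 hL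
    have h := main s r c hr0 hrs
    rw [hy, hcost]
    linarith
  have hfin := le_csInf hBne hle
  linarith
end

section
/- Assume all entries of R and C are nonnegative. Let (r(1),𝒞(1)) and (r*,𝒞*) be equilibria and let OPT be the minimum total cost of a transformation path from (r(1),𝒞(1)) to (r*,𝒞*). Then there exists a transformation path from (r(1),𝒞(1)) to (r*,𝒞*) with total cost at most OPT + 2m·(2‖R‖_{1,1} + ‖C‖_{1,1}) all of whose intermediate column profiles belong to the set {𝒞(1), 𝒞*} ∪ {𝒞_{pq} : p, q ∈ Fin m}, where 𝒞_{pq} are the rounded column profiles obtained from optimal solutions of the linear-programming relaxations. -/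
open Finset

/-- `(i, 𝒞)` is an equilibrium if `T_𝒞(i) = 0` and `T_i(𝒞) = 0`. -/
def IsEquilibrium {m n k : ℕ} [NeZero m] [NeZero n] (R C : Fin m → Fin n → ℝ)
    (i : Fin m) (𝒞 : Fin k → Fin n) : Prop :=
  Trow R 𝒞 i = 0 ∧ Tcol C i 𝒞 = 0

/-- Total cost of the transformation path `P 0, P 1, …, P L`. -/
noncomputable def pathCost {m n k : ℕ} [NeZero m] [NeZero n] (R C : Fin m → Fin n → ℝ)
    (P : ℕ → Fin m × (Fin k → Fin n)) (L : ℕ) : ℝ :=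
  ∑ t ∈ Finset.range L, (Tcol C (P t).1 (P (t+1)).2 + Trow R (P t).2 (P (t+1)).1)

/-- The set of total costs of transformation paths from profile `a` to profile `b`. -/
noncomputable def transCosts {m n k : ℕ} [NeZero m] [NeZero n] (R C : Fin m → Fin n → ℝ)
    (a b : Fin m × (Fin k → Fin n)) : Set ℝ :=
  {x | ∃ (L : ℕ) (P : ℕ → Fin m × (Fin k → Fin n)),
    P 0 = a ∧ P L = b ∧ x = pathCost R C P L}

lemma sum_fiber_mul {k n : ℕ} (𝒞 : Fin k → Fin n) (f : Fin n → ℝ) :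
    ∑ q, ((univ.filter fun j => 𝒞 j = q).card : ℝ) * f q = ∑ j, f (𝒞 j) := by
  rw [← Finset.sum_fiberwise univ 𝒞 (fun j => f (𝒞 j))]
  refine Finset.sum_congr rfl fun q _ => ?_
  have h : ∀ j ∈ filter (fun j => 𝒞 j = q) univ, f (𝒞 j) = f q := fun j hj => by
    rw [(Finset.mem_filter.mp hj).2]
  rw [Finset.sum_congr rfl h, Finset.sum_const, nsmul_eq_mul]

lemma sum_pairs (f : ℕ → ℝ) (a : ℕ) :
    ∑ t ∈ range (2*a), f t = ∑ j ∈ range a, (f (2*j) + f (2*j+1)) := by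
  induction a with
  | zero => simp
  | succ a ih =>
    have h2 : 2 * (a + 1) = (2 * a + 1) + 1 := by ring
    rw [h2, Finset.sum_range_succ, Finset.sum_range_succ, Finset.sum_range_succ, ih]
    ring

lemma splice {m : ℕ} [NeZero m] (w : Fin m → Fin m → ℝ) (hw : ∀ p q, 0 ≤ w p q) :
    ∀ (a : ℕ) (d : ℕ → Fin m), ∃ (a' : ℕ) (d' : ℕ → Fin m), a' < m ∧ d' 0 = d 0 ∧ d' a' = d a ∧
      ∑ j ∈ range a', w (d' j) (d' (j+1)) ≤ ∑ j ∈ range a, w (d j) (d (j+1)) := by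
  intro a
  induction a using Nat.strong_induction_on with
  | _ a ih =>
  intro d
  by_cases ha : a < m
  · exact ⟨a, d, ha, rfl, rfl, le_refl _⟩
  · push_neg at ha
    have hcard : Fintype.card (Fin m) < Fintype.card (Fin (a+1)) := by
      simpa using by omega
    obtain ⟨t₁, t₂, hne, heq⟩ :=
      Fintype.exists_ne_map_eq_of_card_lt (fun t : Fin (a+1) => d t) hcard
    obtain ⟨i, j, hij, hdij, hja⟩ : ∃ i j : ℕ, i < j ∧ d i = d j ∧ j ≤ a := by
      rcases lt_or_gt_of_ne (fun h : (t₁ : ℕ) = (t₂ : ℕ) => hne (Fin.ext h)) with h | h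
      · exact ⟨t₁, t₂, h, heq, by omega⟩
      · exact ⟨t₂, t₁, h, heq.symm, by omega⟩
    set a₂ := a - (j - i) with ha₂
    set d₂ : ℕ → Fin m := fun t => if t ≤ i then d t else d (t + (j - i)) with hd₂
    have hlt : a₂ < a := by omega
    have hv0 : ∀ t, t ≤ i → d₂ t = d t := fun t ht => by simp only [hd₂]; rw [if_pos ht]
    have hv1 : ∀ t, i ≤ t → d₂ t = d (t + (j - i)) := by
      intro t ht
      rcases le_or_gt t i with h | h
      · have hti : t = i := le_antisymm h ht
        simp only [hd₂]
        rw [if_pos h, hti, hdij]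
        congr 1; omega
      · simp only [hd₂]; rw [if_neg (not_le.mpr h)]
    have hend : d₂ a₂ = d a := by
      rw [hv1 a₂ (by omega)]; congr 1; omega
    obtain ⟨a', d', hm, h0, hl, hsum⟩ := ih a₂ hlt d₂
    refine ⟨a', d', hm, by rw [h0, hv0 0 (Nat.zero_le i)], by rw [hl, hend], hsum.trans ?_⟩
    have split2 : ∑ t ∈ range a₂, w (d₂ t) (d₂ (t+1))
        = ∑ t ∈ Ico 0 i, w (d t) (d (t+1)) + ∑ t ∈ Ico j a, w (d t) (d (t+1)) := by
      rw [range_eq_Ico, ← Finset.sum_Ico_consecutive _ (Nat.zero_le i) (by omega : i ≤ a₂)]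
      congr 1
      · refine Finset.sum_congr rfl fun t ht => ?_
        have ht' := (mem_Ico.mp ht).2
        rw [hv0 t (by omega), hv0 (t+1) (by omega)]
      · rw [Finset.sum_congr rfl (fun t ht => by
          rw [hv1 t (mem_Ico.mp ht).1, hv1 (t+1) (by have := (mem_Ico.mp ht).1; omega)]),
          Finset.sum_Ico_eq_sum_range, Finset.sum_Ico_eq_sum_range]
        have hh : a₂ - i = a - j := by omega
        rw [hh]
        exact Finset.sum_congr rfl fun t _ => by congr 2 <;> omega
    rw [split2, range_eq_Ico, ← Finset.sum_Ico_consecutive _ (Nat.zero_le i) (by omega : i ≤ a),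
      ← Finset.sum_Ico_consecutive _ (by omega : i ≤ j) (by omega : j ≤ a), ← add_assoc]
    have hnn : 0 ≤ ∑ t ∈ Ico i j, w (d t) (d (t+1)) := Finset.sum_nonneg fun t _ => hw _ _
    linarith


lemma round_bound {m n k : ℕ} [NeZero m] [NeZero n]
    (R C : Fin m → Fin n → ℝ) (hR : ∀ p q, 0 ≤ R p q) (hC : ∀ p q, 0 ≤ C p q)
    (p q z : Fin m) (x : Fin n → ℝ) (hfeas : LPfeasible R k z x)
    (u : Fin n)
    (hu : ∀ q : Fin n, (univ.sup' univ_nonempty fun p => R p u) ≤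
      univ.sup' univ_nonempty fun p => R p q)
    (x' : Fin n → ℤ) (hx' : ∀ q' ≠ u, x' q' = ⌊x q'⌋)
    (hx'u : x' u = ⌊x u⌋ + ((k:ℤ) - ∑ q', ⌊x q'⌋))
    (𝒞' : Fin k → Fin n)
    (hcount : ∀ q' : Fin n, ((univ.filter fun j => 𝒞' j = q').card : ℤ) = x' q') :
    Tcol C p 𝒞' + Trow R 𝒞' q ≤ LPobj R C k p q z x
      + (2 * (∑ p, ∑ q, R p q) + ∑ p, ∑ q, C p q) := by
  have hXd : ∀ f : Fin n → ℝ, ∑ j, f (𝒞' j) = ∑ q', (x' q' : ℝ) * f q' := by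
    intro f
    rw [← sum_fiber_mul 𝒞' f]
    refine Finset.sum_congr rfl fun q' _ => ?_
    congr 1
    exact_mod_cast congrArg (Int.cast : ℤ → ℝ) (hcount q')
  set F : Fin n → ℝ := fun q' => x q' - (⌊x q'⌋ : ℝ) with hF
  have hF0 : ∀ q', 0 ≤ F q' := fun q' => sub_nonneg.mpr (Int.floor_le _)
  have hF1 : ∀ q', F q' ≤ 1 := fun q' => by
    have := Int.sub_one_lt_floor (x q'); simp only [hF]; linarith
  have hne : ∀ q', q' ≠ u → x q' - (x' q' : ℝ) = F q' := fun q' h => by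
    rw [hx' q' h]
  have hXu : x u - (x' u : ℝ) = -∑ q' ∈ univ.erase u, F q' := by
    have hsum : ∑ q', x q' = (k:ℝ) := hfeas.2.1
    have h1 : (x' u : ℝ) = (⌊x u⌋:ℝ) + ((k:ℝ) - ∑ q', (⌊x q'⌋:ℝ)) := by
      rw [hx'u]; push_cast; ring
    have hsplit : ∑ q' ∈ univ.erase u, F q' + F u = ∑ q', F q' :=
      Finset.sum_erase_add univ F (mem_univ u)
    have h2 : ∑ q', F q' = (∑ q', x q') - ∑ q', (⌊x q'⌋:ℝ) := by
      rw [← Finset.sum_sub_distrib]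
    simp only [hF] at hsplit h2 ⊢
    rw [h1]
    linarith
  have hxu_le : x u - (x' u : ℝ) ≤ 0 := by
    rw [hXu]; exact neg_nonpos.mpr (Finset.sum_nonneg fun q' _ => hF0 q')
  have hDb : ∀ G : Fin n → ℝ, (∀ q', 0 ≤ G q') →
      ∑ q', x q' * G q' - ∑ q', (x' q' : ℝ) * G q' ≤ ∑ q', G q' := by
    intro G hG
    have h0 : ∑ q', x q' * G q' - ∑ q', (x' q' : ℝ) * G q'
        = ∑ q', (x q' - (x' q' : ℝ)) * G q' := by
      rw [← Finset.sum_sub_distrib]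
      exact Finset.sum_congr rfl fun q' _ => by ring
    have h1 : ∑ q' ∈ univ.erase u, (x q' - (x' q':ℝ)) * G q' + (x u - (x' u:ℝ)) * G u
        = ∑ q', (x q' - (x' q':ℝ)) * G q' :=
      Finset.sum_erase_add univ _ (mem_univ u)
    have h2 : ∑ q' ∈ univ.erase u, (x q' - (x' q':ℝ)) * G q' ≤ ∑ q' ∈ univ.erase u, G q' := by
      refine Finset.sum_le_sum fun q' hq' => ?_
      rw [hne q' (Finset.ne_of_mem_erase hq')]
      exact mul_le_of_le_one_left (hG q') (hF1 q')
    have h3 : (x u - (x' u:ℝ)) * G u ≤ 0 :=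
      mul_nonpos_iff.mpr (Or.inr ⟨hxu_le, hG u⟩)
    have h4 : ∑ q' ∈ univ.erase u, G q' ≤ ∑ q', G q' :=
      Finset.sum_le_sum_of_subset_of_nonneg (Finset.erase_subset _ _) fun q' _ _ => hG q'
    linarith
  have hRtot : ∀ i : Fin m, ∑ q', R i q' ≤ ∑ p', ∑ q', R p' q' :=
    fun i => Finset.single_le_sum (f := fun p' => ∑ q', R p' q')
      (fun p' _ => Finset.sum_nonneg fun q' _ => hR p' q') (mem_univ i)
  have hCtot : ∑ q', C p q' ≤ ∑ p', ∑ q', C p' q' :=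
    Finset.single_le_sum (f := fun p' => ∑ q', C p' q')
      (fun p' _ => Finset.sum_nonneg fun q' _ => hC p' q') (mem_univ p)
  have hA3 : ∀ i : Fin m, ∑ q', (x' q' : ℝ) * R i q'
      ≤ ∑ q', x q' * R z q' + ∑ p', ∑ q', R p' q' := by
    intro i
    have e1 : ∑ q', (x' q':ℝ) * R i q'
        = ∑ q', x q' * R i q' + ∑ q', ((x' q':ℝ) - x q') * R i q' := by
      rw [← Finset.sum_add_distrib]
      exact Finset.sum_congr rfl fun q' _ => by ring
    have e2 : ∑ q' ∈ univ.erase u, ((x' q':ℝ) - x q') * R i q' + ((x' u:ℝ) - x u) * R i u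
        = ∑ q', ((x' q':ℝ) - x q') * R i q' :=
      Finset.sum_erase_add univ _ (mem_univ u)
    have e3 : ∑ q' ∈ univ.erase u, ((x' q':ℝ) - x q') * R i q' ≤ 0 := by
      refine Finset.sum_nonpos fun q' hq' => ?_
      have hq : (x' q' : ℝ) - x q' = -F q' := by
        rw [← hne q' (Finset.ne_of_mem_erase hq')]; ring
      rw [hq]
      exact mul_nonpos_iff.mpr (Or.inr ⟨neg_nonpos.mpr (hF0 q'), hR i q'⟩)
    have e4 : ((x' u:ℝ) - x u) * R i u = ∑ q' ∈ univ.erase u, F q' * R i u := by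
      have hq : (x' u : ℝ) - x u = ∑ q' ∈ univ.erase u, F q' := by
        have := hXu; linarith
      rw [hq, Finset.sum_mul]
    have e6 : ∀ q' ∈ univ.erase u, F q' * R i u
        ≤ univ.sup' univ_nonempty fun p' => R p' q' := fun q' _ =>
      (mul_le_of_le_one_left (hR i u) (hF1 q')).trans
        ((Finset.le_sup' (fun p' => R p' u) (mem_univ i)).trans (hu q'))
    have e7 : ∑ q' ∈ univ.erase u, F q' * R i u
        ≤ ∑ q' ∈ univ.erase u, univ.sup' univ_nonempty fun p' => R p' q' :=
      Finset.sum_le_sum e6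
    have e8 : ∑ q' ∈ univ.erase u, (univ.sup' univ_nonempty fun p' => R p' q')
        ≤ ∑ q' : Fin n, univ.sup' univ_nonempty fun p' => R p' q' := by
      refine Finset.sum_le_sum_of_subset_of_nonneg (Finset.erase_subset _ _) fun q' _ _ => ?_
      exact le_trans (hR i q') (Finset.le_sup' (fun p' => R p' q') (mem_univ i))
    have e9 : ∑ q' : Fin n, (univ.sup' univ_nonempty fun p' => R p' q')
        ≤ ∑ q' : Fin n, ∑ p', R p' q' := by
      refine Finset.sum_le_sum fun q' _ => ?_
      obtain ⟨i₀, _, hi₀⟩ := Finset.exists_mem_eq_sup' univ_nonempty (fun p' => R p' q')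
      rw [hi₀]
      exact Finset.single_le_sum (fun p' _ => hR p' q') (mem_univ i₀)
    have e10 : (∑ q' : Fin n, ∑ p', R p' q') = ∑ p', ∑ q', R p' q' := Finset.sum_comm
    have e11 : ∑ q', x q' * R i q' ≤ ∑ q', x q' * R z q' := hfeas.2.2 i
    linarith
  have hsup : (univ.sup' univ_nonempty fun i => ∑ j, R i (𝒞' j))
      ≤ ∑ q', x q' * R z q' + ∑ p', ∑ q', R p' q' := by
    refine Finset.sup'_le _ _ fun i _ => ?_
    rw [hXd (fun v => R i v)]
    exact hA3 i
  have hCb : ∑ q', x q' * C p q' - ∑ q', (x' q' : ℝ) * C p q' ≤ ∑ p', ∑ q', C p' q' :=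
    le_trans (hDb (fun q' => C p q') (fun q' => hC p q')) hCtot
  have hRb : ∑ q', x q' * R q q' - ∑ q', (x' q' : ℝ) * R q q' ≤ ∑ p', ∑ q', R p' q' :=
    le_trans (hDb (fun q' => R q q') (fun q' => hR q q')) (hRtot q)
  simp only [Tcol, Trow, LPobj]
  rw [hXd (fun v => C p v), hXd (fun v => R q v)]
  linarith

/-- Given equilibria `(r(1),𝒞(1))` and `(r*,𝒞*)`, there is a transformation path between them
of total cost at most `OPT + 2m·(2‖R‖₁₁ + ‖C‖₁₁)` whose intermediate column profiles all
belong to `{𝒞(1), 𝒞*} ∪ {𝒞_{pq} : p, q}`, where the `𝒞_{pq}` are the rounded column profiles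
obtained from optimal solutions of the LP relaxations. -/
theorem approx_transformation_path_with_rounded_profiles
    (m n k : ℕ) [NeZero m] [NeZero n]
    (R C : Fin m → Fin n → ℝ)
    (hR : ∀ p q, 0 ≤ R p q) (hC : ∀ p q, 0 ≤ C p q)
    (r1 rstar : Fin m) (C1 Cstar : Fin k → Fin n)
    (hinit : IsEquilibrium R C r1 C1)
    (htarget : IsEquilibrium R C rstar Cstar)
    (z : Fin m → Fin m → Fin m) (x : Fin m → Fin m → Fin n → ℝ)
    (hfeas : ∀ p q : Fin m, LPfeasible R k (z p q) (x p q))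
    (hopt : ∀ p q : Fin m,
      IsLeast (wstarSet R C k p q) (LPobj R C k p q (z p q) (x p q)))
    (u : Fin n)
    (hu : ∀ q : Fin n, (univ.sup' univ_nonempty fun p => R p u) ≤
      univ.sup' univ_nonempty fun p => R p q)
    (x' : Fin m → Fin m → Fin n → ℤ)
    (hx' : ∀ p q : Fin m, ∀ q' ≠ u, x' p q q' = ⌊x p q q'⌋)
    (hx'u : ∀ p q : Fin m, x' p q u = ⌊x p q u⌋ + ((k : ℤ) - ∑ q', ⌊x p q q'⌋))
    (𝒞pq : Fin m → Fin m → (Fin k → Fin n))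
    (hcount : ∀ p q : Fin m, ∀ q' : Fin n,
      ((univ.filter fun j => 𝒞pq p q j = q').card : ℤ) = x' p q q') :
    ∃ (L : ℕ) (P : ℕ → Fin m × (Fin k → Fin n)),
      P 0 = (r1, C1) ∧ P L = (rstar, Cstar) ∧
      (∀ t ≤ L, (P t).2 = C1 ∨ (P t).2 = Cstar ∨ ∃ p q, (P t).2 = 𝒞pq p q) ∧
      pathCost R C P L ≤ sInf (transCosts R C (r1, C1) (rstar, Cstar))
        + 2 * m * (2 * (∑ p, ∑ q, R p q) + ∑ p, ∑ q, C p q) := by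
    classical
    obtain ⟨hinitR, hinitC⟩ := hinit
    obtain ⟨htarR, htarC⟩ := htarget
    have hSR0 : (0:ℝ) ≤ ∑ p, ∑ q, R p q :=
      Finset.sum_nonneg fun p _ => Finset.sum_nonneg fun q _ => hR p q
    have hSC0 : (0:ℝ) ≤ ∑ p, ∑ q, C p q :=
      Finset.sum_nonneg fun p _ => Finset.sum_nonneg fun q _ => hC p q
    set err : ℝ := 2 * (∑ p, ∑ q, R p q) + ∑ p, ∑ q, C p q with herrdef
    have herr0 : 0 ≤ err := by rw [herrdef]; linarith
    have hTrow0 : ∀ (𝒞 : Fin k → Fin n) (i : Fin m), 0 ≤ Trow R 𝒞 i := fun 𝒞 i =>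
      sub_nonneg.mpr (Finset.le_sup' (fun i' => ∑ j, R i' (𝒞 j)) (mem_univ i))
    have hTcol0 : ∀ (i : Fin m) (𝒞 : Fin k → Fin n), 0 ≤ Tcol C i 𝒞 := by
      intro i 𝒞
      have h1 : ∑ j, C i (𝒞 j) ≤ ∑ _j : Fin k, (univ.sup' univ_nonempty fun q' => C i q') :=
        Finset.sum_le_sum fun j _ => Finset.le_sup' (fun q' => C i q') (mem_univ (𝒞 j))
      rw [Finset.sum_const, card_univ, Fintype.card_fin, nsmul_eq_mul] at h1
      simp only [Tcol]
      linarith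
    set wst : Fin m → Fin m → ℝ := fun p q => LPobj R C k p q (z p q) (x p q) with hwst
    have hwst0 : ∀ p q, 0 ≤ wst p q := by
      intro p q
      obtain ⟨hx0, hxs, hxm⟩ := hfeas p q
      have h1 : ∑ q', x p q q' * C p q' ≤ (k:ℝ) * univ.sup' univ_nonempty fun q' => C p q' := by
        calc ∑ q', x p q q' * C p q'
            ≤ ∑ q', x p q q' * (univ.sup' univ_nonempty fun q'' => C p q'') :=
              Finset.sum_le_sum fun q' _ => mul_le_mul_of_nonneg_left
                (Finset.le_sup' (fun q'' => C p q'') (mem_univ q')) (hx0 q')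
          _ = (∑ q', x p q q') * (univ.sup' univ_nonempty fun q'' => C p q'') :=
              (Finset.sum_mul _ _ _).symm
          _ = (k:ℝ) * univ.sup' univ_nonempty fun q'' => C p q'' := by rw [hxs]
      have h2 := hxm q
      simp only [hwst, LPobj]
      linarith
    have hmem : ∀ (p q : Fin m) (𝒞 : Fin k → Fin n), wst p q ≤ Tcol C p 𝒞 + Trow R 𝒞 q := by
      intro p q 𝒞
      obtain ⟨zz, _, hzz⟩ := Finset.exists_mem_eq_sup' univ_nonempty (fun i => ∑ j, R i (𝒞 j))
      set X : Fin n → ℝ := fun q' => ((univ.filter fun j => 𝒞 j = q').card : ℝ) with hX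
      have hXd : ∀ f : Fin n → ℝ, ∑ q', X q' * f q' = ∑ j, f (𝒞 j) := fun f =>
        sum_fiber_mul 𝒞 f
      have hfe : LPfeasible R k zz X := by
        refine ⟨fun q' => Nat.cast_nonneg _, ?_, ?_⟩
        · have h1 := hXd (fun _ => (1:ℝ))
          simp only [mul_one] at h1
          rw [h1, Finset.sum_const, card_univ, Fintype.card_fin, nsmul_eq_mul, mul_one]
        · intro z'
          rw [hXd (fun v => R z' v), hXd (fun v => R zz v), ← hzz]
          exact Finset.le_sup' (fun i => ∑ j, R i (𝒞 j)) (mem_univ z')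
      have hle := (hopt p q).2 ⟨zz, X, hfe, rfl⟩
      refine le_trans hle (le_of_eq ?_)
      simp only [LPobj, Tcol, Trow]
      rw [hXd (fun v => C p v), hXd (fun v => R zz v), hXd (fun v => R q v), ← hzz]
      ring
    have hTrowC1 : ∀ i, wst r1 i ≤ Trow R C1 i := fun i => by
      have h := hmem r1 i C1; rw [hinitC] at h; linarith
    set Sp : Fin m → Set ℝ := fun p => {y | ∃ (a : ℕ) (d : ℕ → Fin m), d 0 = p ∧ d a = rstar ∧
        y = ∑ j ∈ Finset.range a, wst (d j) (d (j+1))} with hSp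
    have hSpne : ∀ p, (Sp p).Nonempty := fun p =>
      ⟨wst p rstar, 1, fun t => if t = 0 then p else rstar, by norm_num, by norm_num, by
        rw [Finset.sum_range_one]; norm_num⟩
    have hSpbdd : ∀ p, BddBelow (Sp p) := fun p => ⟨0, by
      rintro y ⟨a, d, _, _, hy⟩
      rw [hy]; exact Finset.sum_nonneg fun j _ => hwst0 _ _⟩
    set V : Fin m → ℝ := fun p => sInf (Sp p) with hV
    have hV0 : ∀ p, 0 ≤ V p := fun p => le_csInf (hSpne p) (by
      rintro y ⟨a, d, _, _, hy⟩
      rw [hy]; exact Finset.sum_nonneg fun j _ => hwst0 _ _)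
    have hVr : V rstar ≤ 0 := csInf_le (hSpbdd rstar) ⟨0, fun _ => rstar, rfl, rfl, by simp⟩
    have hVpre : ∀ p p', V p ≤ wst p p' + V p' := by
      intro p p'
      have h : V p - wst p p' ≤ sInf (Sp p') := by
        refine le_csInf (hSpne p') ?_
        rintro y ⟨a, d, h0, ha, hy⟩
        rw [sub_le_iff_le_add]
        set d'' : ℕ → Fin m := fun t => if t = 0 then p else d (t-1) with hd''
        have hd''s : ∀ t : ℕ, d'' (t+1) = d t := fun t => by simp [hd'']
        refine csInf_le (hSpbdd p) ⟨a+1, d'', by simp [hd''], by rw [hd''s a, ha], ?_⟩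
        rw [Finset.sum_range_succ']
        have hterm : ∀ j ∈ range a, wst (d'' (j+1)) (d'' (j+1+1)) = wst (d j) (d (j+1)) :=
          fun j _ => by rw [hd''s j, hd''s (j+1)]
        rw [Finset.sum_congr rfl hterm]
        have h00 : d'' 0 = p := by simp [hd'']
        rw [h00, hd''s 0, h0, hy]
        try ring
      linarith
    set H : (Fin k → Fin n) → ℝ :=
      fun 𝒞 => univ.inf' univ_nonempty (fun p' => Trow R 𝒞 p' + V p') with hH
    have hHle : ∀ 𝒞 p', H 𝒞 ≤ Trow R 𝒞 p' + V p' := fun 𝒞 p' =>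
      Finset.inf'_le _ (mem_univ p')
    have hHCst : H Cstar ≤ 0 := le_trans (hHle Cstar rstar) (by rw [htarR]; linarith [hVr])
    have hTcolH : ∀ (p : Fin m) (𝒞 : Fin k → Fin n), V p ≤ Tcol C p 𝒞 + H 𝒞 := by
      intro p 𝒞
      obtain ⟨ps, _, hps⟩ := Finset.exists_mem_eq_inf' univ_nonempty
        (fun p' => Trow R 𝒞 p' + V p')
      have h1 : V p ≤ wst p ps + V ps := hVpre p ps
      have h2 : wst p ps ≤ Tcol C p 𝒞 + Trow R 𝒞 ps := hmem p ps 𝒞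
      have h3 : H 𝒞 = Trow R 𝒞 ps + V ps := hps
      linarith
    have hLB : ∀ (L : ℕ) (P' : ℕ → Fin m × (Fin k → Fin n)), P' L = (rstar, Cstar) →
        V (P' 0).1 + H (P' 0).2 ≤ pathCost R C P' L := by
      intro L
      induction L with
      | zero =>
        intro P' hPL
        rw [hPL]
        have hpc : pathCost R C P' 0 = 0 := by simp [pathCost]
        rw [hpc]
        simp only []
        linarith [hVr, hHCst]
      | succ L ih =>
        intro P' hPL
        have hshift := ih (fun t => P' (t+1)) hPL
        have hPc : pathCost R C P' (L+1) = pathCost R C (fun t => P' (t+1)) L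
            + (Tcol C (P' 0).1 (P' 1).2 + Trow R (P' 0).2 (P' 1).1) := by
          simp only [pathCost]
          rw [Finset.sum_range_succ']
        have h1 := hTcolH (P' 0).1 (P' 1).2
        have h2 := hHle (P' 0).2 (P' 1).1
        rw [hPc]
        linarith
    have htcne : (transCosts R C (r1, C1) (rstar, Cstar)).Nonempty := by
      refine ⟨pathCost R C (fun t => if t = 0 then (r1, C1) else (rstar, Cstar)) 1, 1,
        fun t => if t = 0 then (r1, C1) else (rstar, Cstar), by norm_num, by norm_num, rfl⟩
    have hVH1 : V r1 ≤ H C1 := by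
      obtain ⟨p₀, _, hp₀⟩ := Finset.exists_mem_eq_inf' univ_nonempty
        (fun p' => Trow R C1 p' + V p')
      have h1 : H C1 = Trow R C1 p₀ + V p₀ := hp₀
      have h2 := hTrowC1 p₀
      have h3 := hVpre r1 p₀
      linarith
    have hsInfLB : 2 * V r1 ≤ sInf (transCosts R C (r1, C1) (rstar, Cstar)) := by
      refine le_csInf htcne ?_
      rintro y ⟨L, P', hP0, hPL, hy⟩
      have h := hLB L P' hPL
      rw [hP0] at h
      simp only [] at h
      rw [hy]
      linarith [hVH1]
    -- the direct two-profile path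
    set Pd : ℕ → Fin m × (Fin k → Fin n) :=
      fun t => if t = 0 then (r1, C1) else (rstar, Cstar) with hPd
    have hPd0 : Pd 0 = (r1, C1) := by norm_num [hPd]
    have hPd1 : Pd 1 = (rstar, Cstar) := by norm_num [hPd]
    have hPdcost : pathCost R C Pd 1 = Tcol C r1 Cstar + Trow R C1 rstar := by
      simp only [pathCost, Finset.sum_range_one, hPd0, hPd1]
    have hPdcols : ∀ t ≤ 1, (Pd t).2 = C1 ∨ (Pd t).2 = Cstar ∨ ∃ p q, (Pd t).2 = 𝒞pq p q := by
      intro t _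
      by_cases ht : t = 0
      · left; rw [ht, hPd0]
      · right; left; simp only [hPd]; rw [if_neg ht]
    by_cases herr : err ≤ 0
    · -- degenerate case: R and C vanish identically
      have herr' : err = 0 := le_antisymm herr herr0
      have hRsum : ∑ p, ∑ q, R p q = 0 := by
        by_contra hne2
        have : 0 < ∑ p, ∑ q, R p q := lt_of_le_of_ne hSR0 (Ne.symm hne2)
        rw [herrdef] at herr; linarith
      have hCsum : ∑ p, ∑ q, C p q = 0 := by
        rw [herrdef] at herr'; linarith
      have hR0 : ∀ p q, R p q = 0 := by
        intro p q
        have hrow : ∀ p' ∈ univ, (0:ℝ) ≤ ∑ q', R p' q' :=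
          fun p' _ => Finset.sum_nonneg fun q' _ => hR p' q'
        have h1 : ∑ q', R p q' = 0 := by
          have := (Finset.sum_eq_zero_iff_of_nonneg hrow).mp hRsum p (mem_univ p)
          exact this
        exact (Finset.sum_eq_zero_iff_of_nonneg (fun q' _ => hR p q')).mp h1 q (mem_univ q)
      have hC0 : ∀ p q, C p q = 0 := by
        intro p q
        have hrow : ∀ p' ∈ univ, (0:ℝ) ≤ ∑ q', C p' q' :=
          fun p' _ => Finset.sum_nonneg fun q' _ => hC p' q'
        have h1 : ∑ q', C p q' = 0 :=
          (Finset.sum_eq_zero_iff_of_nonneg hrow).mp hCsum p (mem_univ p)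
        exact (Finset.sum_eq_zero_iff_of_nonneg (fun q' _ => hC p q')).mp h1 q (mem_univ q)
      have hTcolz : Tcol C r1 Cstar = 0 := by
        simp only [Tcol]
        have hs : (univ.sup' univ_nonempty fun q' => C r1 q') = 0 := by
          rw [Finset.sup'_congr univ_nonempty rfl (fun q' _ => hC0 r1 q'), Finset.sup'_const]
        rw [hs]
        simp [hC0]
      have hTrowz : Trow R C1 rstar = 0 := by
        simp only [Trow]
        have hs : (univ.sup' univ_nonempty fun i => ∑ j, R i (C1 j)) = 0 := by
          rw [Finset.sup'_congr univ_nonempty rfl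
            (fun i _ => Finset.sum_eq_zero fun j _ => hR0 i (C1 j)), Finset.sup'_const]
        rw [hs]
        simp [hR0]
      refine ⟨1, Pd, hPd0, hPd1, hPdcols, ?_⟩
      rw [hPdcost, hTcolz, hTrowz]
      have hnn : (0:ℝ) ≤ 2 * m * err := mul_nonneg (by positivity) herr0
      linarith [hsInfLB, hV0 r1]
    · push_neg at herr
      have hVlt : sInf (Sp r1) < V r1 + err := by
        have : V r1 = sInf (Sp r1) := rfl
        linarith
      obtain ⟨y₀, hy₀S, hy₀lt⟩ := exists_lt_of_csInf_lt (hSpne r1) hVlt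
      obtain ⟨a, d, hd0, hda, hy₀⟩ := hy₀S
      obtain ⟨a', d', ham, hd'0, hd'a, hsum⟩ := splice wst hwst0 a d
      have hchain : ∑ j ∈ range a', wst (d' j) (d' (j+1)) < V r1 + err := by
        rw [hy₀] at hy₀lt
        linarith
      have hd'0' : d' 0 = r1 := by rw [hd'0, hd0]
      have hd'a' : d' a' = rstar := by rw [hd'a, hda]
      rcases Nat.eq_zero_or_pos a' with ha0 | ha1
      · -- r1 = rstar : direct path suffices
        have hrr : r1 = rstar := by rw [← hd'0', ← hd'a', ha0]
        have hTcolz : Tcol C r1 Cstar = 0 := by rw [hrr]; exact htarC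
        have hTrowz : Trow R C1 rstar = 0 := by rw [← hrr]; exact hinitR
        refine ⟨1, Pd, hPd0, hPd1, hPdcols, ?_⟩
        rw [hPdcost, hTcolz, hTrowz]
        have h2 : (0:ℝ) ≤ 2 * m * err := mul_nonneg (by positivity) herr0
        linarith [hsInfLB, hV0 r1]
      · -- main construction
        obtain ⟨b, rfl⟩ : ∃ b, a' = b + 1 := ⟨a' - 1, by omega⟩
        set G : ℕ → (Fin k → Fin n) := fun j => 𝒞pq (d' j) (d' (j+1)) with hGdef
        set TCs : ℕ → ℝ := fun j => Tcol C (d' j) (G j) with hTCdef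
        set TRs : ℕ → ℝ := fun j => Trow R (G j) (d' (j+1)) with hTRdef
        set P : ℕ → Fin m × (Fin k → Fin n) := fun t =>
          if t = 0 then (r1, C1) else if 2*(b+1)+1 ≤ t then (rstar, Cstar)
          else (d' (t/2), G ((t-1)/2)) with hPdef
        have hP0 : P 0 = (r1, C1) := by norm_num [hPdef]
        have hPL : P (2*(b+1)+1) = (rstar, Cstar) := by
          simp only [hPdef]
          rw [if_neg (by omega), if_pos (le_refl _)]
        have hPmid : ∀ t, 1 ≤ t → t ≤ 2*(b+1) → P t = (d' (t/2), G ((t-1)/2)) := by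
          intro t h1 h2
          simp only [hPdef]
          rw [if_neg (by omega), if_neg (by omega)]
        have hPodd : ∀ j, j < b+1 → P (2*j+1) = (d' j, G j) := by
          intro j hj
          rw [hPmid (2*j+1) (by omega) (by omega)]
          rw [show (2*j+1)/2 = j from by omega, show (2*j+1-1)/2 = j from by omega]
        have hPeven : ∀ j, j < b+1 → P (2*j+2) = (d' (j+1), G j) := by
          intro j hj
          rw [hPmid (2*j+2) (by omega) (by omega)]
          rw [show (2*j+2)/2 = j+1 from by omega, show (2*j+2-1)/2 = j from by omega]
        set g : ℕ → ℝ :=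
          fun t => Tcol C (P t).1 (P (t+1)).2 + Trow R (P t).2 (P (t+1)).1 with hgdef
        have hg0 : g 0 = TCs 0 := by
          simp only [hgdef]
          rw [show (0:ℕ)+1 = 2*0+1 from by norm_num, hPodd 0 (by omega), hP0]
          simp only [hTCdef]
          rw [hd'0', hinitR, add_zero]
        have hgodd : ∀ j, j < b+1 → g (2*j+1) = TCs j + TRs j := by
          intro j hj
          simp only [hgdef]
          rw [show 2*j+1+1 = 2*j+2 from by omega, hPodd j hj, hPeven j hj]
        have hgeven : ∀ j, j < b+1 →
            g (2*j+2) = (if j+1 < b+1 then TCs (j+1) else 0) + TRs j := by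
          intro j hj
          simp only [hgdef]
          rw [hPeven j hj]
          by_cases hjb : j+1 < b+1
          · rw [show 2*j+2+1 = 2*(j+1)+1 from by omega, hPodd (j+1) hjb, if_pos hjb]
          · have hjb' : j = b := by omega
            rw [show 2*j+2+1 = 2*(b+1)+1 from by omega, hPL, if_neg hjb]
            simp only [hTRdef]
            rw [hjb', hd'a', htarC]
        have hcost : pathCost R C P (2*(b+1)+1) = 2 * ∑ j ∈ range (b+1), (TCs j + TRs j) := by
          have hpc : pathCost R C P (2*(b+1)+1) = ∑ t ∈ range (2*(b+1)+1), g t := rfl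
          rw [hpc, Finset.sum_range_succ', sum_pairs (fun t => g (t+1)) (b+1)]
          have hterm : ∀ j ∈ range (b+1), g (2*j+1) + g (2*j+1+1)
              = (TCs j + TRs j) + ((if j+1 < b+1 then TCs (j+1) else 0) + TRs j) := by
            intro j hj
            have hjlt := mem_range.mp hj
            rw [hgodd j hjlt, show 2*j+1+1 = 2*j+2 from by omega, hgeven j hjlt]
          rw [Finset.sum_congr rfl hterm, hg0]
          have hsplit : ∑ j ∈ range (b+1),
              ((TCs j + TRs j) + ((if j+1 < b+1 then TCs (j+1) else 0) + TRs j))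
              = (∑ j ∈ range (b+1), (TCs j + TRs j))
                + (∑ j ∈ range (b+1), (if j+1 < b+1 then TCs (j+1) else 0))
                + ∑ j ∈ range (b+1), TRs j := by
            rw [← Finset.sum_add_distrib, ← Finset.sum_add_distrib]
            exact Finset.sum_congr rfl fun j _ => by ring
          have hite : ∑ j ∈ range (b+1), (if j+1 < b+1 then TCs (j+1) else 0)
              = ∑ j ∈ range b, TCs (j+1) := by
            rw [Finset.sum_range_succ, if_neg (lt_irrefl _), add_zero]
            exact Finset.sum_congr rfl fun j hj => if_pos (by
              have := mem_range.mp hj; omega)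
          have hTCsplit : ∑ j ∈ range (b+1), TCs j = ∑ j ∈ range b, TCs (j+1) + TCs 0 :=
            Finset.sum_range_succ' TCs b
          have hsum2 : ∑ j ∈ range (b+1), (TCs j + TRs j)
              = ∑ j ∈ range (b+1), TCs j + ∑ j ∈ range (b+1), TRs j :=
            Finset.sum_add_distrib
          rw [hsplit, hite]
          linarith [hsum2, hTCsplit]
        have hround' : ∀ j, TCs j + TRs j ≤ wst (d' j) (d' (j+1)) + err := by
          intro j
          have h := round_bound R C hR hC (d' j) (d' (j+1)) (z (d' j) (d' (j+1)))
            (x (d' j) (d' (j+1))) (hfeas _ _) u hu (x' (d' j) (d' (j+1)))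
            (hx' _ _) (hx'u _ _) (G j) (hcount _ _)
          simp only [hTCdef, hTRdef, hwst, herrdef]
          exact h
        have hsumle : ∑ j ∈ range (b+1), (TCs j + TRs j)
            ≤ ∑ j ∈ range (b+1), wst (d' j) (d' (j+1)) + (b+1) * err := by
          have h1 : ∑ j ∈ range (b+1), (TCs j + TRs j)
              ≤ ∑ j ∈ range (b+1), (wst (d' j) (d' (j+1)) + err) :=
            Finset.sum_le_sum fun j _ => hround' j
          have h2 : ∑ j ∈ range (b+1), (wst (d' j) (d' (j+1)) + err)
              = ∑ j ∈ range (b+1), wst (d' j) (d' (j+1)) + ((b:ℝ)+1) * err := by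
            rw [Finset.sum_add_distrib]
            congr 1
            rw [Finset.sum_const, card_range, nsmul_eq_mul]
            push_cast
            ring
          rw [h2] at h1
          exact_mod_cast h1
        have hblem : ((b:ℝ)+1) ≤ (m:ℝ) - 1 := by
          have : b + 2 ≤ m := by omega
          have := (Nat.cast_le (α := ℝ)).mpr this
          push_cast at this
          linarith
        refine ⟨2*(b+1)+1, P, hP0, hPL, ?_, ?_⟩
        · intro t _
          by_cases ht0 : t = 0
          · left; rw [ht0, hP0]
          · by_cases htL : 2*(b+1)+1 ≤ t
            · right; left
              simp only [hPdef]
              rw [if_neg ht0, if_pos htL]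
            · right; right
              refine ⟨d' ((t-1)/2), d' ((t-1)/2 + 1), ?_⟩
              simp only [hPdef, hGdef]
              rw [if_neg ht0, if_neg htL]
        · rw [hcost]
          have hfin : 2 * ∑ j ∈ range (b+1), (TCs j + TRs j)
              ≤ 2 * (V r1 + err) + 2 * (((b:ℝ)+1) * err) := by
            have h2 : (∑ j ∈ range (b+1), wst (d' j) (d' (j+1))) < V r1 + err := hchain
            linarith [hsumle]
          have hm2 : ((b:ℝ)+1) * err ≤ ((m:ℝ) - 1) * err :=
            mul_le_mul_of_nonneg_right hblem herr0
          have hgoal : 2 * (V r1 + err) + 2 * (((m:ℝ)-1) * err) = 2 * V r1 + 2 * m * err := by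
            ring
          linarith [hsInfLB, hfin, hm2, hgoal]
end
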